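/- For any entire holomorphic function h: ℂ → ℂ, the symplectic spinor s(x,y,q) = h(x+iy) · q e^{−q²/2} satisfies the symplectic twistor equation T_s s = 0, where T_s = ∂_x − q ∂_q ∂_x + i q² ∂_y. -/

import Mathlib

noncomputable section

def px (f : ℝ → ℝ → ℝ → ℂ) : ℝ → ℝ → ℝ → ℂ := fun x y q => deriv (fun t => f t y q) x
def py (f : ℝ → ℝ → ℝ → ℂ) : ℝ → ℝ → ℝ → ℂ := fun x y q => deriv (fun t => f x t q) y
def pq (f : ℝ → ℝ → ℝ → ℂ) : ℝ → ℝ → ℝ → ℂ := fun x y q => deriv (fun t => f x y t) q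

/-- X_s = y ∂_q + i x q -/
def Xs (f : ℝ → ℝ → ℝ → ℂ) : ℝ → ℝ → ℝ → ℂ :=
  fun x y q => (y : ℂ) * pq f x y q + Complex.I * x * q * f x y q

/-- D_s = i q ∂_y − ∂_x ∂_q -/
def Ds (f : ℝ → ℝ → ℝ → ℂ) : ℝ → ℝ → ℝ → ℂ :=
  fun x y q => Complex.I * q * py f x y q - px (pq f) x y q

/-- T_s = ∂_x − q ∂_q ∂_x + i q² ∂_y -/
def Ts (f : ℝ → ℝ → ℝ → ℂ) : ℝ → ℝ → ℝ → ℂ :=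
  fun x y q => px f x y q - (q : ℂ) * pq (px f) x y q + Complex.I * q ^ 2 * py f x y q

private lemma hasDerivAt_E (q : ℝ) :
    HasDerivAt (fun t : ℝ => Complex.exp (-(t : ℂ) ^ 2 / 2))
      (-(q : ℂ) * Complex.exp (-(q : ℂ) ^ 2 / 2)) q := by
  have inner : HasDerivAt (fun t : ℝ => -(t : ℂ) ^ 2 / 2) (-(q : ℂ)) q := by
    have : HasDerivAt (fun w : ℂ => -w ^ 2 / 2) (-(q : ℂ)) (q : ℂ) := by
      have := (((hasDerivAt_id ((q : ℂ))).pow 2).neg).div_const 2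
      refine this.congr_deriv ?_
      simp [id]
      ring
    exact this.comp_ofReal
  simpa [mul_comm, Function.comp_def] using (Complex.hasDerivAt_exp (-(q : ℂ) ^ 2 / 2)).comp q inner

theorem Ts_annihilates_holomorphic (h : ℂ → ℂ) (hh : Differentiable ℂ h) (x y q : ℝ) :
    Ts (fun x y q => h ((x : ℂ) + Complex.I * y) * q * Complex.exp (-(q : ℂ) ^ 2 / 2))
      x y q = 0 := by
  set E : ℝ → ℂ := fun t : ℝ => Complex.exp (-(t : ℂ) ^ 2 / 2) with hE
  set z : ℂ := (x : ℂ) + Complex.I * y with hz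
  -- x-derivative of f at any point (a, y, q)
  have hx : ∀ (a y q : ℝ), HasDerivAt (fun t : ℝ => h ((t : ℂ) + Complex.I * y) * q * E q)
      (deriv h ((a : ℂ) + Complex.I * y) * q * E q) a := by
    intro a y q
    have inner : HasDerivAt (fun w : ℂ => h (w + Complex.I * y)) (deriv h ((a : ℂ) + Complex.I * y)) (a : ℂ) := by
      simpa [Function.comp_def] using ((hh _).hasDerivAt.comp (a : ℂ) ((hasDerivAt_id ((a : ℂ))).add_const (Complex.I * y)))
    exact (inner.comp_ofReal.mul_const (q : ℂ)).mul_const (E q)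
  -- y-derivative
  have hy : ∀ (x b q : ℝ), HasDerivAt (fun t : ℝ => h ((x : ℂ) + Complex.I * t) * q * E q)
      (Complex.I * deriv h ((x : ℂ) + Complex.I * b) * q * E q) b := by
    intro x b q
    have inner : HasDerivAt (fun w : ℂ => h ((x : ℂ) + Complex.I * w))
        (deriv h ((x : ℂ) + Complex.I * b) * Complex.I) (b : ℂ) := by
      have i1 : HasDerivAt (fun w : ℂ => (x : ℂ) + Complex.I * w) Complex.I (b : ℂ) := by
        simpa using ((hasDerivAt_id ((b : ℂ))).const_mul Complex.I).const_add (x : ℂ)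
      simpa [Function.comp_def] using ((hh _).hasDerivAt.comp (b : ℂ) i1)
    have := (inner.comp_ofReal.mul_const (q : ℂ)).mul_const (E q)
    refine this.congr_deriv ?_
    ring
  -- q-derivative of c * t * E t
  have hq : ∀ (c : ℂ) (q : ℝ), HasDerivAt (fun t : ℝ => c * t * E t)
      (c * (1 - (q : ℂ) ^ 2) * E q) q := by
    intro c q
    have ht : HasDerivAt (fun t : ℝ => c * (t : ℂ)) c q := by
      simpa using (Complex.ofRealCLM.hasDerivAt (x := q)).const_mul c
    have := ht.mul (hasDerivAt_E q)
    refine this.congr_deriv ?_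
    simp only [hE]; ring
  -- compute px f
  have px_eq : ∀ (a y q : ℝ),
      px (fun x y q => h ((x : ℂ) + Complex.I * y) * q * Complex.exp (-(q : ℂ) ^ 2 / 2)) a y q
        = deriv h ((a : ℂ) + Complex.I * y) * q * E q := fun a y q => (hx a y q).deriv
  have py_eq : py (fun x y q => h ((x : ℂ) + Complex.I * y) * q * Complex.exp (-(q : ℂ) ^ 2 / 2)) x y q
        = Complex.I * deriv h z * q * E q := (hy x y q).deriv
  have pqpx_eq : pq (px (fun x y q => h ((x : ℂ) + Complex.I * y) * q * Complex.exp (-(q : ℂ) ^ 2 / 2))) x y q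
        = deriv h z * (1 - (q : ℂ) ^ 2) * E q := by
    unfold pq
    have : (fun t : ℝ => px (fun x y q => h ((x : ℂ) + Complex.I * y) * q * Complex.exp (-(q : ℂ) ^ 2 / 2)) x y t)
        = fun t : ℝ => deriv h z * t * E t := by
      funext t; exact px_eq x y t
    rw [this]
    exact (hq (deriv h z) q).deriv
  simp only [Ts, px_eq, py_eq, pqpx_eq, hz]
  ring_nf
  simp [Complex.I_sq]
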